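/- For every r ≥ 2, the graph H_r (on v_1,…,v_{3r−1} with path edges v_i v_{i+1} and chords v_i v_j for i ≤ j−2, i ≡ 2 (mod 3), j ≡ 1 (mod 3)) contains no induced subgraph isomorphic to 2P3, the disjoint union of two paths each on 3 vertices. -/

import Mathlib

def obstGraph (r : ℕ) : SimpleGraph (Fin (3 * r - 1)) :=
  SimpleGraph.fromRel (fun a b =>
    a.val + 1 = b.val ∨ (a.val + 2 ≤ b.val ∧ a.val % 3 = 1 ∧ b.val % 3 = 0))

/-- `2P3`: the disjoint union of two paths on three vertices. -/
def twoP3 : SimpleGraph (Fin 6) :=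
  SimpleGraph.fromRel (fun a b =>
    (a = 0 ∧ b = 1) ∨ (a = 1 ∧ b = 2) ∨ (a = 3 ∧ b = 4) ∨ (a = 4 ∧ b = 5))

lemma obst_adj {m : ℕ} {a b : Fin (3 * m - 1)} : (obstGraph m).Adj a b ↔
    (a.val ≠ b.val ∧ ((a.val + 1 = b.val ∨ (a.val + 2 ≤ b.val ∧ a.val % 3 = 1 ∧ b.val % 3 = 0))
      ∨ (b.val + 1 = a.val ∨ (b.val + 2 ≤ a.val ∧ b.val % 3 = 1 ∧ a.val % 3 = 0)))) := by
  rw [obstGraph, SimpleGraph.fromRel_adj]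
  constructor
  · rintro ⟨h, h2⟩
    exact ⟨fun hv => h (Fin.ext hv), by tauto⟩
  · rintro ⟨h, h2⟩
    exact ⟨fun hv => h (congrArg Fin.val hv), by tauto⟩

instance : DecidableRel twoP3.Adj := fun a b =>
  decidable_of_iff _ (SimpleGraph.fromRel_adj _ a b).symm

lemma twoP3_other_path : ∀ x : Fin 6, ∃ p q s : Fin 6, twoP3.Adj q p ∧ twoP3.Adj q s ∧ p ≠ s ∧
    ¬twoP3.Adj x p ∧ ¬twoP3.Adj x q ∧ ¬twoP3.Adj x s ∧ x ≠ p ∧ x ≠ q ∧ x ≠ s := by decide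

lemma twoP3_nbr : ∀ x : Fin 6, ∃ y : Fin 6, twoP3.Adj x y := by decide

set_option synthInstance.maxSize 400 in
set_option maxHeartbeats 1000000 in
lemma twoP3_cases : ∀ x : Fin 6,
    (∃ y y' : Fin 6, twoP3.Adj x y ∧ twoP3.Adj x y' ∧ y ≠ y') ∨
    (∃ y z p q s : Fin 6, twoP3.Adj x y ∧ twoP3.Adj y z ∧ z ≠ x ∧
      twoP3.Adj q p ∧ twoP3.Adj q s ∧ p ≠ s ∧
      (¬twoP3.Adj x p ∧ ¬twoP3.Adj y p ∧ ¬twoP3.Adj z p ∧ x ≠ p ∧ y ≠ p ∧ z ≠ p) ∧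
      (¬twoP3.Adj x q ∧ ¬twoP3.Adj y q ∧ ¬twoP3.Adj z q ∧ x ≠ q ∧ y ≠ q ∧ z ≠ q) ∧
      (¬twoP3.Adj x s ∧ ¬twoP3.Adj y s ∧ ¬twoP3.Adj z s ∧ x ≠ s ∧ y ≠ s ∧ z ≠ s)) := by decide

theorem stmt_13 (r : ℕ) (hr : 2 ≤ r) :
    ¬ Nonempty (twoP3 ↪g obstGraph r) := by
  induction r, hr using Nat.le_induction with
  | base =>
    rintro ⟨f⟩
    have h := Fintype.card_le_of_injective f f.injective
    simp [Fintype.card_fin] at h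
  | succ r hr ih =>
    rintro ⟨f⟩
    have hinj : Function.Injective f := f.injective
    have hne : ∀ a b : Fin 6, a ≠ b → (f a).val ≠ (f b).val :=
      fun a b hab h => hab (hinj (Fin.ext h))
    have hmadj : ∀ a b : Fin 6, twoP3.Adj a b → (obstGraph (r+1)).Adj (f a) (f b) :=
      fun a b h => f.map_rel_iff.mpr h
    have hmnadj : ∀ a b : Fin 6, ¬twoP3.Adj a b → ¬(obstGraph (r+1)).Adj (f a) (f b) :=
      fun a b h h' => h (f.map_rel_iff.mp h')
    -- uniqueness of neighbors among vertices ≢ 0 (mod 3)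
    have uniq : ∀ q p s : Fin 6, twoP3.Adj q p → twoP3.Adj q s →
        (f q).val % 3 ≠ 0 → (f p).val % 3 ≠ 0 → (f s).val % 3 ≠ 0 → p = s := by
      intro q p s hqp hqs hq3 hp3 hs3
      have h1 := obst_adj.mp (hmadj q p hqp)
      have h2 := obst_adj.mp (hmadj q s hqs)
      have : (f p).val = (f s).val := by omega
      exact hinj (Fin.ext this)
    have h1 : ∀ x : Fin 6, (f x).val ≠ 1 := by
      intro x hx
      obtain ⟨p, q, s, hqp, hqs, hps, hnp, hnq, hns, hxp, hxq, hxs⟩ := twoP3_other_path x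
      have aux : ∀ t : Fin 6, ¬twoP3.Adj x t → x ≠ t → (f t).val % 3 ≠ 0 := by
        intro t hnt hxt
        have h := hmnadj x t hnt
        rw [obst_adj] at h
        have := hne x t hxt
        omega
      exact hps (uniq q p s hqp hqs (aux q hnq hxq) (aux p hnp hxp) (aux s hns hxs))
    have h0 : ∀ x : Fin 6, (f x).val ≠ 0 := by
      intro x hx
      obtain ⟨y, hxy⟩ := twoP3_nbr x
      have h := obst_adj.mp (hmadj x y hxy)
      have := h1 y
      omega
    have h2 : ∀ x : Fin 6, (f x).val ≠ 2 := by
      intro x hx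
      rcases twoP3_cases x with ⟨y, y', hxy, hxy', hyy'⟩ |
        ⟨y, z, p, q, s, hxy, hyz, hzx, hqp, hqs, hps, hp, hq, hs⟩
      · have ha := obst_adj.mp (hmadj x y hxy)
        have hb := obst_adj.mp (hmadj x y' hxy')
        have := h1 y
        have := h1 y'
        have : (f y).val = (f y').val := by omega
        exact hyy' (hinj (Fin.ext this))
      · have hy := obst_adj.mp (hmadj x y hxy)
        have hfy : (f y).val = 3 := by have := h1 y; omega
        have hz := obst_adj.mp (hmadj y z hyz)
        have hfz : (f z).val = 4 := by
          have := h1 z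
          have := hne z x hzx
          omega
        have aux : ∀ t : Fin 6, ¬twoP3.Adj x t → ¬twoP3.Adj y t → ¬twoP3.Adj z t →
            x ≠ t → y ≠ t → z ≠ t → (f t).val % 3 ≠ 0 := by
          intro t hnx hny hnz htx hty htz
          have hax := hmnadj x t hnx
          have hay := hmnadj y t hny
          have haz := hmnadj z t hnz
          rw [obst_adj] at hax hay haz
          have := hne x t htx
          have := hne y t hty
          have := hne z t htz
          have := h0 t
          have := h1 t
          omega
        obtain ⟨hnxp, hnyp, hnzp, hxp, hyp, hzp⟩ := hp
        obtain ⟨hnxq, hnyq, hnzq, hxq, hyq, hzq⟩ := hq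
        obtain ⟨hnxs, hnys, hnzs, hxs, hys, hzs⟩ := hs
        exact hps (uniq q p s hqp hqs (aux q hnxq hnyq hnzq hxq hyq hzq)
          (aux p hnxp hnyp hnzp hxp hyp hzp) (aux s hnxs hnys hnzs hxs hys hzs))
    have hge : ∀ x : Fin 6, 3 ≤ (f x).val := by
      intro x
      have := h0 x; have := h1 x; have := h2 x
      omega
    have hlt : ∀ x : Fin 6, (f x).val < 3 * (r + 1) - 1 := fun x => (f x).isLt
    refine ih ⟨⟨⟨fun x => ⟨(f x).val - 3, by have := hlt x; have := hge x; omega⟩, ?_⟩, ?_⟩⟩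
    · intro a b hab
      simp only [Fin.mk.injEq] at hab
      have := hge a; have := hge b
      exact hinj (Fin.ext (by omega))
    · intro a b
      show (obstGraph r).Adj ⟨(f a).val - 3, _⟩ ⟨(f b).val - 3, _⟩ ↔ twoP3.Adj a b
      rw [obst_adj, ← f.map_rel_iff, obst_adj]
      simp only
      have := hge a; have := hge b
      have := hlt a; have := hlt b
      constructor
      · rintro ⟨h, hd⟩; exact ⟨by omega, by omega⟩
      · rintro ⟨h, hd⟩; exact ⟨by omega, by omega⟩
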